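/- If p : ℝ → ℝ satisfies the Riccati equation p' + p² - 1 = 0 with p(0) = 0, then p(s) = tanh(s) for all s. Consequently the generating curve of an invariant surface in Sol with intrinsic Gaussian curvature K_int = -1 (and cos θ not identically zero) is the graph of z(y) = log(cosh y). -/

import Mathlib

open Real

lemma aux_nonneg (u g : ℝ → ℝ) (hu : ∀ s, HasDerivAt u (g s * u s) s)
    (hg : Continuous g) (h0 : u 0 = 0) (b : ℝ) (hb : 0 ≤ b) : u b = 0 := by
  obtain ⟨C, hC⟩ := (isCompact_Icc (a := (0:ℝ)) (b := b)).exists_bound_of_continuousOn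
    hg.continuousOn
  have key := norm_le_gronwallBound_of_norm_deriv_right_le
    (f := u) (f' := fun s => g s * u s) (δ := 0) (K := max C 0) (ε := 0) (a := 0) (b := b)
    (fun s _ => (hu s).continuousAt.continuousWithinAt)
    (fun s _ => (hu s).hasDerivWithinAt)
    (by simp [h0])
    (fun s hs => by
      have h1 : |g s| ≤ max C 0 := le_max_of_le_left (by simpa using hC s ⟨hs.1, hs.2.le⟩)
      have : ‖g s * u s‖ = |g s| * ‖u s‖ := by simp [abs_mul]
      rw [this, add_zero]
      exact mul_le_mul_of_nonneg_right h1 (norm_nonneg _))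
  have := key b ⟨hb, le_refl b⟩
  simp only [gronwallBound_ε0, zero_mul] at this
  simpa using le_antisymm this (norm_nonneg _)

lemma aux_all (u g : ℝ → ℝ) (hu : ∀ s, HasDerivAt u (g s * u s) s)
    (hg : Continuous g) (h0 : u 0 = 0) (s : ℝ) : u s = 0 := by
  rcases le_or_gt 0 s with h | h
  · exact aux_nonneg u g hu hg h0 s h
  · have := aux_nonneg (fun t => u (-t)) (fun t => -g (-t))
      (fun t => by
        have := ((hu (-t)).comp t (hasDerivAt_neg t))
        exact this.congr_deriv (by ring))
      (hg.comp continuous_neg).neg (by simpa using h0) (-s) (by linarith)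
    simpa using this

theorem stmt_3 (p : ℝ → ℝ) (hp : ∀ s, HasDerivAt p (1 - p s ^ 2) s) (h0 : p 0 = 0) :
    (∀ s, p s = tanh s) ∧
    ∀ (z y : ℝ → ℝ),
      (∀ s, HasDerivAt z (p s) s) → z 0 = 0 →
      (∀ s, HasDerivAt y (exp (z s) * sqrt (1 - p s ^ 2)) s) → y 0 = 0 →
      ∀ s, z s = log (cosh (y s)) := by
  have hptanh : ∀ s, p s = tanh s := by
    set u : ℝ → ℝ := fun s => p s * cosh s - sinh s with hu_def
    have hu : ∀ s, HasDerivAt u ((-p s) * u s) s := by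
      intro s
      have := ((hp s).mul (Real.hasDerivAt_cosh s)).sub (Real.hasDerivAt_sinh s)
      exact this.congr_deriv (by simp only [hu_def]; ring)
    have hu0 : u 0 = 0 := by simp [hu_def, h0]
    have hpc : Continuous (fun s => -p s) :=
      (continuous_iff_continuousAt.mpr (fun s => (hp s).continuousAt)).neg
    intro s
    have hu0' : u s = 0 := aux_all u (fun s => -p s) hu hpc hu0 s
    have hc : cosh s ≠ 0 := (Real.cosh_pos s).ne'
    have : p s * cosh s = sinh s := by
      have := hu0'; simp only [hu_def] at this; linarith
    rw [Real.tanh_eq_sinh_div_cosh, eq_div_iff hc, this]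
  refine ⟨hptanh, ?_⟩
  intro z y hz hz0 hy hy0
  -- z = log ∘ cosh
  have hzlog : ∀ s, z s = log (cosh s) := by
    have hlc : ∀ s, HasDerivAt (fun t => log (cosh t)) (tanh s) s := by
      intro s
      have := (Real.hasDerivAt_cosh s).log (Real.cosh_pos s).ne'
      convert this using 1
      rw [Real.tanh_eq_sinh_div_cosh]
    have hdiff : ∀ s, HasDerivAt (fun t => z t - log (cosh t)) 0 s := by
      intro s
      have := (hz s).sub (hlc s)
      rw [hptanh s, sub_self] at this; exact this
    have hconst := is_const_of_deriv_eq_zero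
      (f := fun t => z t - log (cosh t))
      (fun t => (hdiff t).differentiableAt)
      (fun t => (hdiff t).deriv)
    intro s
    have := hconst s 0
    simp only [Real.cosh_zero, Real.log_one, hz0, sub_zero] at this
    linarith
  -- y s = s
  have hys : ∀ s, y s = s := by
    have h1 : ∀ s, HasDerivAt y 1 s := by
      intro s
      have hc := Real.cosh_pos s
      have hsq : 1 - p s ^ 2 = (cosh s)⁻¹ ^ 2 := by
        rw [hptanh s, Real.tanh_eq_sinh_div_cosh]
        field_simp
        linarith [Real.cosh_sq s]
      have hsqrt : sqrt (1 - p s ^ 2) = (cosh s)⁻¹ := by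
        rw [hsq, Real.sqrt_sq (by positivity)]
      have := hy s
      rw [hsqrt, hzlog s, Real.exp_log hc, mul_inv_cancel₀ hc.ne'] at this
      exact this
    have hdiff : ∀ s, HasDerivAt (fun t => y t - t) 0 s := by
      intro s
      have := (h1 s).sub (hasDerivAt_id s); rw [sub_self] at this; exact this
    have hconst := is_const_of_deriv_eq_zero
      (f := fun t => y t - t)
      (fun t => (hdiff t).differentiableAt)
      (fun t => (hdiff t).deriv)
    intro s
    have := hconst s 0
    simp only [hy0, sub_zero] at this
    linarith
  intro s
  rw [hys s, hzlog s]
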